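/- arXiv:2003.06410 — 3 statements merged into one kernel-verified Lean document; each statement's English description precedes it below -/
import Mathlib

section
/- Let z_0, ..., z_d be pairwise distinct complex numbers, let W_0, ..., W_d be invertible complex m×m matrices, and let F_0, ..., F_d be complex m×n matrices. Define the generalized matrix-valued barycentric function R(z) = (∑_{k=0}^d W_k/(z − z_k))^{-1} · (∑_{k=0}^d W_k F_k/(z − z_k)) at every z outside the support points at which the matrix ∑_{k=0}^d W_k/(z − z_k) is invertible. Then for every index j, R(z) tends to F_j (entrywise, equivalently in Frobenius norm) as z tends to z_j within a punctured neighborhood of z_j. That is, the generalized barycentric form (bary-B) with nonsingular matrix-valued weights interpolates the matrices F_j at all support points z_j. -/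
open Filter Topology

/-- Smul-inverse for matrices over a field, assuming only that the scalar is nonzero. -/
lemma smul_inv_of_ne_zero {m : ℕ} (c : ℂ) (hc : c ≠ 0) (A : Matrix (Fin m) (Fin m) ℂ) :
    (c • A)⁻¹ = c⁻¹ • A⁻¹ := by
  by_cases h : IsUnit A.det
  · simpa [Units.smul_def] using Matrix.inv_smul' A (Units.mk0 c hc) h
  · have h2 : ¬ IsUnit (c • A).det := by
      rw [Matrix.det_smul]
      simp only [isUnit_iff_ne_zero, ne_eq, not_not] at h ⊢
      simp [h]
    rw [Matrix.nonsing_inv_apply_not_isUnit _ h, Matrix.nonsing_inv_apply_not_isUnit _ h2,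
      smul_zero]

set_option maxHeartbeats 1000000 in
/-- The generalized matrix-valued barycentric form (bary-B) with nonsingular matrix
weights and pairwise distinct support points interpolates the matrices `F j` at all
support points: `R(x) = (∑ₖ (x − zₖ)⁻¹ • Wₖ)⁻¹ * (∑ₖ (x − zₖ)⁻¹ • (Wₖ * Fₖ))` tends to
`F j` (entrywise, i.e. in the topology of the matrix space) as `x → z j` within a
punctured neighborhood of `z j`. -/
theorem baryB_interpolates
    (d m n : ℕ) (z : Fin (d + 1) → ℂ)
    (W : Fin (d + 1) → Matrix (Fin m) (Fin m) ℂ)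
    (F : Fin (d + 1) → Matrix (Fin m) (Fin n) ℂ)
    (hz : Function.Injective z) (hW : ∀ k, IsUnit (W k)) (j : Fin (d + 1)) :
    Tendsto (fun x : ℂ =>
        (∑ k, (x - z k)⁻¹ • W k)⁻¹ * ∑ k, (x - z k)⁻¹ • (W k * F k))
      (𝓝[≠] (z j)) (𝓝 (F j)) := by
  set g : ℂ → Matrix (Fin m) (Fin m) ℂ :=
    fun x => ∑ k, ((x - z j) * (x - z k)⁻¹) • W k with hg_def
  set h : ℂ → Matrix (Fin m) (Fin n) ℂ :=
    fun x => ∑ k, ((x - z j) * (x - z k)⁻¹) • (W k * F k) with hh_def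
  -- auxiliary: tendsto of a single coefficient
  have hcoef : ∀ k : Fin (d + 1),
      Tendsto (fun x : ℂ => (x - z j) * (x - z k)⁻¹) (𝓝[≠] (z j))
        (𝓝 (if k = j then 1 else 0)) := by
    intro k
    by_cases hk : k = j
    · subst hk
      simp only [if_pos rfl]
      have : ∀ x ∈ ({z k}ᶜ : Set ℂ), (x - z k) * (x - z k)⁻¹ = 1 := by
        intro x hx
        have : x - z k ≠ 0 := sub_ne_zero.mpr hx
        field_simp
      refine Tendsto.congr' ?_ tendsto_const_nhds
      filter_upwards [self_mem_nhdsWithin] with x hx using (this x hx).symm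
    · simp only [if_neg hk]
      have hzk : z j ≠ z k := fun hh => hk (hz hh.symm)
      have : ContinuousAt (fun x : ℂ => (x - z j) * (x - z k)⁻¹) (z j) := by
        exact (continuousAt_id.sub continuousAt_const).mul
          ((continuousAt_id.sub continuousAt_const).inv₀ (sub_ne_zero.mpr hzk))
      have := this.continuousWithinAt (s := {z j}ᶜ)
      simpa [ContinuousWithinAt, sub_self] using this
  have hg : Tendsto g (𝓝[≠] (z j)) (𝓝 (W j)) := by
    have : Tendsto g (𝓝[≠] (z j)) (𝓝 (∑ k, (if k = j then (1:ℂ) else 0) • W k)) := by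
      apply tendsto_finset_sum
      intro k _
      exact ((hcoef k).smul tendsto_const_nhds)
    simpa [Finset.sum_ite_eq', ite_smul] using this
  have hh : Tendsto h (𝓝[≠] (z j)) (𝓝 (W j * F j)) := by
    have : Tendsto h (𝓝[≠] (z j)) (𝓝 (∑ k, (if k = j then (1:ℂ) else 0) • (W k * F k))) := by
      apply tendsto_finset_sum
      intro k _
      exact ((hcoef k).smul tendsto_const_nhds)
    simpa [Finset.sum_ite_eq', ite_smul] using this
  -- inverse is continuous at W j
  have hdetU : IsUnit (W j).det := (Matrix.isUnit_iff_isUnit_det _).mp (hW j)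
  have hdet : (W j).det ≠ 0 := hdetU.ne_zero
  have hinv : ContinuousAt Inv.inv (W j) := by
    apply continuousAt_matrix_inv
    rw [Ring.inverse_eq_inv']
    exact continuousAt_inv₀ hdet
  have hginv : Tendsto (fun x => (g x)⁻¹) (𝓝[≠] (z j)) (𝓝 (W j)⁻¹) :=
    (hinv.tendsto).comp hg
  have hmul : Continuous (fun p : Matrix (Fin m) (Fin m) ℂ × Matrix (Fin m) (Fin n) ℂ =>
      p.1 * p.2) := Continuous.matrix_mul continuous_fst continuous_snd
  have hmain : Tendsto (fun x => (g x)⁻¹ * h x) (𝓝[≠] (z j)) (𝓝 ((W j)⁻¹ * (W j * F j))) := by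
    have h2 := hginv.prodMk_nhds hh
    have h3 := (hmul.tendsto ((W j)⁻¹, W j * F j)).comp h2
    exact h3
  have hfinal : (W j)⁻¹ * (W j * F j) = F j := by
    rw [← Matrix.mul_assoc, Matrix.nonsing_inv_mul _ hdetU, Matrix.one_mul]
  rw [hfinal] at hmain
  -- eventual equality
  refine hmain.congr' ?_
  filter_upwards [self_mem_nhdsWithin] with x hx
  have hxj : x - z j ≠ 0 := sub_ne_zero.mpr hx
  have e1 : (∑ k, (x - z k)⁻¹ • W k) = (x - z j)⁻¹ • g x := by
    rw [hg_def, Finset.smul_sum]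
    refine Finset.sum_congr rfl fun k _ => ?_
    rw [smul_smul, ← mul_assoc, inv_mul_cancel₀ hxj, one_mul]
  have e2 : (∑ k, (x - z k)⁻¹ • (W k * F k)) = (x - z j)⁻¹ • h x := by
    rw [hh_def, Finset.smul_sum]
    refine Finset.sum_congr rfl fun k _ => ?_
    rw [smul_smul, ← mul_assoc, inv_mul_cancel₀ hxj, one_mul]
  rw [e1, e2, smul_inv_of_ne_zero _ (inv_ne_zero hxj), inv_inv,
    Matrix.smul_mul, Matrix.mul_smul, smul_smul, mul_inv_cancel₀ hxj, one_smul]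
end

section
/- Let z_0, ..., z_d be pairwise distinct complex numbers, let C_0, ..., C_d be complex m×n matrices, and let D_0, ..., D_d be complex m×m matrices with D_j invertible for a fixed index j. Define R(z) = (∑_{k=0}^d D_k/(z − z_k))^{-1} · (∑_{k=0}^d C_k/(z − z_k)) at every z outside the support points at which ∑_{k=0}^d D_k/(z − z_k) is invertible. Then R(z) tends to D_j^{-1} C_j (entrywise, equivalently in Frobenius norm) as z tends to z_j within a punctured neighborhood of z_j. -/
set_option maxHeartbeats 1000000

open Filter Topology

lemma baryC_aux_tendsto (d p q : ℕ) (z : Fin (d + 1) → ℂ)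
    (M : Fin (d + 1) → Matrix (Fin p) (Fin q) ℂ) (j : Fin (d + 1))
    (hz : Function.Injective z) :
    Tendsto (fun x : ℂ =>
        M j + ∑ k ∈ Finset.univ.erase j, ((x - z j) * (x - z k)⁻¹) • M k)
      (𝓝 (z j)) (𝓝 (M j)) := by
  have h1 : Tendsto (fun x : ℂ =>
      ∑ k ∈ Finset.univ.erase j, ((x - z j) * (x - z k)⁻¹) • M k)
      (𝓝 (z j)) (𝓝 (∑ k ∈ Finset.univ.erase j,
        ((z j - z j) * (z j - z k)⁻¹) • M k)) := by
    refine tendsto_finset_sum _ fun k hk => ?_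
    have hk' : z j - z k ≠ 0 := sub_ne_zero.mpr fun h =>
      (Finset.mem_erase.mp hk).1 (hz h).symm
    exact (((continuousAt_id.sub continuousAt_const).mul
      ((continuousAt_id.sub continuousAt_const).inv₀ hk')).smul continuousAt_const)
  have h2 : (∑ k ∈ Finset.univ.erase j, ((z j - z j) * (z j - z k)⁻¹) • M k) = 0 := by
    simp
  rw [h2] at h1
  simpa using (tendsto_const_nhds.add h1 :
    Tendsto (fun x : ℂ => M j + ∑ k ∈ Finset.univ.erase j,
      ((x - z j) * (x - z k)⁻¹) • M k) (𝓝 (z j)) (𝓝 (M j + 0)))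

/-- For the non-interpolatory matrix-valued barycentric form (bary-C) with pairwise
distinct support points and `D j` invertible,
`R(x) = (∑ₖ (x − zₖ)⁻¹ • Dₖ)⁻¹ * (∑ₖ (x − zₖ)⁻¹ • Cₖ)` tends to `D j⁻¹ * C j`
(entrywise, i.e. in the topology of the matrix space) as `x → z j` within a punctured
neighborhood of `z j`. -/
theorem baryC_limit_at_support_point
    (d m n : ℕ) (z : Fin (d + 1) → ℂ)
    (CC : Fin (d + 1) → Matrix (Fin m) (Fin n) ℂ)
    (DD : Fin (d + 1) → Matrix (Fin m) (Fin m) ℂ)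
    (hz : Function.Injective z) (j : Fin (d + 1)) (hDj : IsUnit (DD j)) :
    Tendsto (fun x : ℂ =>
        (∑ k, (x - z k)⁻¹ • DD k)⁻¹ * ∑ k, (x - z k)⁻¹ • CC k)
      (𝓝[≠] (z j)) (𝓝 ((DD j)⁻¹ * CC j)) := by
  classical
  set Fc : ℂ → Matrix (Fin m) (Fin m) ℂ := fun x =>
    DD j + ∑ k ∈ Finset.univ.erase j, ((x - z j) * (x - z k)⁻¹) • DD k with hFcdef
  set Gc : ℂ → Matrix (Fin m) (Fin n) ℂ := fun x =>
    CC j + ∑ k ∈ Finset.univ.erase j, ((x - z j) * (x - z k)⁻¹) • CC k with hGcdef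
  have hFlim : Tendsto Fc (𝓝 (z j)) (𝓝 (DD j)) := baryC_aux_tendsto d m m z DD j hz
  have hGlim : Tendsto Gc (𝓝 (z j)) (𝓝 (CC j)) := baryC_aux_tendsto d m n z CC j hz
  have hdet0 : (DD j).det ≠ 0 :=
    ((Matrix.isUnit_iff_isUnit_det _).mp hDj).ne_zero
  -- inverse tends to the inverse
  have hinvc : ContinuousAt Inv.inv (DD j) := by
    apply continuousAt_matrix_inv
    rw [Ring.inverse_eq_inv']
    exact continuousAt_inv₀ hdet0
  have hFinv : Tendsto (fun x => (Fc x)⁻¹) (𝓝 (z j)) (𝓝 ((DD j)⁻¹)) :=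
    Filter.Tendsto.comp hinvc hFlim
  -- limit of regularized expression
  have hmul : Continuous fun p : Matrix (Fin m) (Fin m) ℂ × Matrix (Fin m) (Fin n) ℂ =>
      p.1 * p.2 := continuous_fst.matrix_mul continuous_snd
  have hlim : Tendsto (fun x => (Fc x)⁻¹ * Gc x) (𝓝 (z j)) (𝓝 ((DD j)⁻¹ * CC j)) := by
    have h := Filter.Tendsto.comp (hmul.tendsto ((DD j)⁻¹, CC j))
      (Filter.Tendsto.prodMk_nhds hFinv hGlim)
    exact h
  -- eventually x avoids all support points
  have hall : ∀ᶠ x in 𝓝[≠] (z j), ∀ k, x ≠ z k := by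
    rw [eventually_all]
    intro k
    by_cases hk : k = j
    · subst hk; exact eventually_mem_nhdsWithin
    · exact eventually_ne_nhdsWithin (fun h => hk (hz h).symm)
  -- eventually Fc x has invertible determinant
  have hdetlim : Tendsto (fun x => (Fc x).det) (𝓝 (z j)) (𝓝 ((DD j).det)) :=
    Filter.Tendsto.comp (Continuous.matrix_det continuous_id).continuousAt hFlim
  have hunit : ∀ᶠ x in 𝓝[≠] (z j), IsUnit (Fc x).det := by
    have h1 : ∀ᶠ x in 𝓝 (z j), (Fc x).det ≠ 0 :=
      hdetlim.eventually (eventually_ne_nhds hdet0)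
    exact (h1.filter_mono nhdsWithin_le_nhds).mono fun x hx => isUnit_iff_ne_zero.mpr hx
  -- eventual equality
  have heq : (fun x : ℂ => (∑ k, (x - z k)⁻¹ • DD k)⁻¹ * ∑ k, (x - z k)⁻¹ • CC k)
      =ᶠ[𝓝[≠] (z j)] fun x => (Fc x)⁻¹ * Gc x := by
    filter_upwards [hall, hunit] with x hx hxu
    have hxj : x - z j ≠ 0 := sub_ne_zero.mpr (hx j)
    have hS : (∑ k, (x - z k)⁻¹ • DD k) = (x - z j)⁻¹ • Fc x := by
      rw [hFcdef]
      simp only [smul_add, Finset.smul_sum, smul_smul]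
      rw [← Finset.add_sum_erase _ _ (Finset.mem_univ j)]
      congr 1
      refine Finset.sum_congr rfl fun k hk => ?_
      rw [inv_mul_cancel_left₀ hxj]
    have hT : (∑ k, (x - z k)⁻¹ • CC k) = (x - z j)⁻¹ • Gc x := by
      rw [hGcdef]
      simp only [smul_add, Finset.smul_sum, smul_smul]
      rw [← Finset.add_sum_erase _ _ (Finset.mem_univ j)]
      congr 1
      refine Finset.sum_congr rfl fun k hk => ?_
      rw [inv_mul_cancel_left₀ hxj]
    rw [hS, hT]
    haveI : Invertible ((x - z j)⁻¹) := invertibleOfNonzero (inv_ne_zero hxj)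
    rw [Matrix.inv_smul _ _ hxu, invOf_eq_inv, inv_inv, Matrix.smul_mul, Matrix.mul_smul,
      smul_smul, mul_inv_cancel₀ hxj, one_smul]
  exact Tendsto.congr' heq.symm (hlim.mono_left nhdsWithin_le_nhds)
end

section
/- Let z_0, ..., z_d be pairwise distinct complex numbers and let W_0, ..., W_d be complex m×m matrices. Define the matrix polynomial P(z) = ∑_{k=0}^d W_k ∏_{j≠k} (z − z_j), each of whose entries is a polynomial of degree at most d. Then: (i) for every complex number z that is not a support point, ∑_{k=0}^d W_k/(z − z_k) = P(z) / ∏_{j=0}^d (z − z_j); (ii) det P(z) is a polynomial of degree at most dm; and (iii) if det P is not identically zero, then the set of points z that are not support points at which the matrix ∑_{k=0}^d W_k/(z − z_k) fails to be invertible is finite with at most dm elements. Hence a generalized barycentric (bary-B) approximant of order d with m×m weight matrices has at most dm poles, i.e., its McMillan degree can be as high as dm but no higher. -/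
open Polynomial Finset

set_option maxHeartbeats 1000000

lemma entry_deg_aux (d m : ℕ) (z : Fin (d + 1) → ℂ)
    (W : Fin (d + 1) → Matrix (Fin m) (Fin m) ℂ)
    (P : Matrix (Fin m) (Fin m) ℂ[X])
    (hP : P = ∑ k, (∏ j ∈ univ.erase k, (X - C (z j))) • (W k).map C) :
    ∀ a b, (P a b).degree ≤ d := by
  intro a b
  subst hP
  rw [Matrix.sum_apply]
  refine (degree_sum_le _ _).trans ?_
  refine Finset.sup_le fun k _ => ?_
  have : ((∏ j ∈ univ.erase k, (X - C (z j))) • (W k).map C) a b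
      = (∏ j ∈ univ.erase k, (X - C (z j))) * C (W k a b) := rfl
  rw [this]
  refine (degree_mul_le _ _).trans ?_
  have h1 : (∏ j ∈ univ.erase k, (X - C (z j))).degree = (d : WithBot ℕ) := by
    rw [degree_prod]
    simp only [degree_X_sub_C]
    rw [Finset.sum_const, Finset.card_erase_of_mem (mem_univ k), card_univ,
      Fintype.card_fin, Nat.add_sub_cancel, nsmul_eq_mul, mul_one]
  calc (∏ j ∈ univ.erase k, (X - C (z j))).degree + (C (W k a b)).degree
      ≤ (d : WithBot ℕ) + 0 := add_le_add h1.le (degree_C_le)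
    _ = d := by simp

/-- A generalized barycentric (bary-B) denominator of order `d` with `m×m` weight
matrices has at most `d·m` points of non-invertibility: with the matrix polynomial
`P(z) = ∑ₖ Wₖ ∏_{j≠k} (z − zⱼ)` (entrywise degree at most `d`), one has
(i) `∑ₖ Wₖ/(z − zₖ) = P(z)/∏ⱼ(z − zⱼ)` away from the support points,
(ii) `det P` has degree at most `d·m`, and
(iii) if `det P` is not identically zero then the set of non-support points at which
`∑ₖ Wₖ/(z − zₖ)` fails to be invertible is finite with at most `d·m` elements. -/
theorem baryB_at_most_dm_poles
    (d m : ℕ) (z : Fin (d + 1) → ℂ) (hz : Function.Injective z)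
    (W : Fin (d + 1) → Matrix (Fin m) (Fin m) ℂ)
    (P : Matrix (Fin m) (Fin m) ℂ[X])
    (hP : P = ∑ k, (∏ j ∈ univ.erase k, (X - C (z j))) • (W k).map C) :
    (∀ a b, (P a b).degree ≤ d) ∧
    (∀ x : ℂ, (∀ k, x ≠ z k) →
      (∑ k, (x - z k)⁻¹ • W k) = (∏ j, (x - z j))⁻¹ • P.map (eval x)) ∧
    P.det.degree ≤ (d * m : ℕ) ∧
    (P.det ≠ 0 →
      {x : ℂ | (∀ k, x ≠ z k) ∧ ¬ IsUnit (∑ k, (x - z k)⁻¹ • W k)}.Finite ∧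
      {x : ℂ | (∀ k, x ≠ z k) ∧ ¬ IsUnit (∑ k, (x - z k)⁻¹ • W k)}.ncard ≤ d * m) := by
  have hdeg := entry_deg_aux d m z W P hP
  -- part (ii)
  have hmap : ∀ x : ℂ, P.map (eval x) = ∑ k, (∏ j ∈ univ.erase k, (x - z j)) • W k := by
    intro x
    subst hP
    ext a b
    simp [Matrix.map_apply, Matrix.sum_apply, Matrix.smul_apply, smul_eq_mul,
      eval_finset_sum, eval_mul, eval_prod, eval_sub, eval_X, eval_C]
  have hpart2 : ∀ x : ℂ, (∀ k, x ≠ z k) →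
      (∑ k, (x - z k)⁻¹ • W k) = (∏ j, (x - z j))⁻¹ • P.map (eval x) := by
    intro x hx
    have hne : ∀ j, x - z j ≠ 0 := fun j => sub_ne_zero.mpr (hx j)
    rw [hmap, Finset.smul_sum]
    refine Finset.sum_congr rfl fun k _ => ?_
    rw [smul_smul]
    congr 1
    have hsplit : ∏ j, (x - z j) = (x - z k) * ∏ j ∈ univ.erase k, (x - z j) :=
      (Finset.mul_prod_erase univ _ (mem_univ k)).symm
    have hprodne : (∏ j ∈ univ.erase k, (x - z j)) ≠ 0 :=
      Finset.prod_ne_zero_iff.mpr fun j _ => hne j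
    rw [hsplit, mul_inv, mul_assoc, inv_mul_cancel₀ hprodne, mul_one]
  -- det degree
  have hdet : P.det.degree ≤ (d * m : ℕ) := by
    rw [Matrix.det_apply']
    refine (degree_sum_le _ _).trans ?_
    refine Finset.sup_le fun σ _ => ?_
    refine (degree_mul_le _ _).trans ?_
    have h0 : ((Equiv.Perm.sign σ : ℤ) : ℂ[X]).degree ≤ 0 := degree_intCast_le _
    have h1 : (∏ i, P (σ i) i).degree ≤ ((d * m : ℕ) : WithBot ℕ) := by
      refine (degree_prod_le _ _).trans ?_
      calc ∑ i, (P (σ i) i).degree ≤ ∑ _i : Fin m, (d : WithBot ℕ) :=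
            Finset.sum_le_sum fun i _ => hdeg _ _
        _ = m • (d : WithBot ℕ) := by rw [Finset.sum_const, card_univ, Fintype.card_fin]
        _ = ((d * m : ℕ) : WithBot ℕ) := by
            rw [nsmul_eq_mul]
            push_cast
            ring
    calc _ ≤ (0 : WithBot ℕ) + ((d * m : ℕ) : WithBot ℕ) := add_le_add h0 h1
      _ = ((d * m : ℕ) : WithBot ℕ) := by rw [zero_add]
  refine ⟨hdeg, hpart2, hdet, fun hne0 => ?_⟩
  -- part (iii)
  have hsub : {x : ℂ | (∀ k, x ≠ z k) ∧ ¬ IsUnit (∑ k, (x - z k)⁻¹ • W k)}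
      ⊆ {x : ℂ | P.det.IsRoot x} := by
    intro x hx
    obtain ⟨hx1, hx2⟩ := hx
    have hne : ∀ j, x - z j ≠ 0 := fun j => sub_ne_zero.mpr (hx1 j)
    have hc : (∏ j, (x - z j)) ≠ 0 := Finset.prod_ne_zero_iff.mpr fun j _ => hne j
    have hcinv : (∏ j, (x - z j))⁻¹ ≠ 0 := inv_ne_zero hc
    by_contra hroot
    apply hx2
    rw [hpart2 x hx1]
    rw [Matrix.isUnit_iff_isUnit_det, Matrix.det_smul]
    have hdet0 : (P.map (eval x)).det = P.det.eval x := by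
      rw [← Polynomial.coe_evalRingHom, ← RingHom.mapMatrix_apply, ← RingHom.map_det]
    rw [hdet0]
    simp only [Set.mem_setOf_eq, IsRoot] at hroot
    exact isUnit_iff_ne_zero.mpr (mul_ne_zero (pow_ne_zero _ hcinv) hroot)
  have hfin : {x : ℂ | P.det.IsRoot x}.Finite := Polynomial.finite_setOf_isRoot hne0
  have hroots : {x : ℂ | P.det.IsRoot x} = ↑P.det.roots.toFinset := by
    ext x
    simp [Multiset.mem_toFinset, mem_roots, hne0]
  refine ⟨hfin.subset hsub, ?_⟩
  calc {x : ℂ | (∀ k, x ≠ z k) ∧ ¬ IsUnit (∑ k, (x - z k)⁻¹ • W k)}.ncard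
      ≤ {x : ℂ | P.det.IsRoot x}.ncard := Set.ncard_le_ncard hsub hfin
    _ = P.det.roots.toFinset.card := by rw [hroots, Set.ncard_coe_finset]
    _ ≤ Multiset.card P.det.roots := Multiset.toFinset_card_le _
    _ ≤ P.det.natDegree := P.det.card_roots' 
    _ ≤ d * m := natDegree_le_iff_degree_le.mpr hdet
end
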